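/- Let f ∈ ℤ[x] be monic and suppose f = g ∘ h with g, h ∈ ℂ[x] monic, deg g ≥ 2, deg h ≥ 2, and h(0) = 0. Then g, h ∈ ℤ[x]. -/

import Mathlib

open Polynomial

theorem my_sub_X_pow_natDegree_le {F : Type*} [Field F] {g : F[X]} (hg : g.Monic) :
    (g - X ^ g.natDegree).natDegree ≤ g.natDegree - 1 := by
  by_cases hgm : g = X ^ g.natDegree
  · simp [← hgm]
  have hdeg : (g - X ^ g.natDegree).degree < g.degree := by
    apply degree_sub_lt
    · rw [degree_X_pow, degree_eq_natDegree hg.ne_zero]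
    · exact hg.ne_zero
    · rw [hg.leadingCoeff, leadingCoeff_X_pow]
  have hne : g - X ^ g.natDegree ≠ 0 := sub_ne_zero.mpr hgm
  have := (natDegree_lt_iff_degree_lt hne).mpr (hdeg.trans_le degree_le_natDegree)
  omega

theorem my_decomp_unique {F : Type*} [Field F] [CharZero F]
    {g₁ h₁ g₂ h₂ : F[X]} (hg₁ : g₁.Monic) (hh₁ : h₁.Monic) (hg₂ : g₂.Monic) (hh₂ : h₂.Monic)
    (hm : g₂.natDegree = g₁.natDegree) (hn : h₂.natDegree = h₁.natDegree)
    (hm1 : 1 ≤ g₁.natDegree) (hn1 : 1 ≤ h₁.natDegree)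
    (h0 : h₁.coeff 0 = h₂.coeff 0)
    (heq : g₁.comp h₁ = g₂.comp h₂) : h₁ = h₂ ∧ g₁ = g₂ := by
  set m := g₁.natDegree with hmdef
  set n := h₁.natDegree with hndef
  have key : ∀ g h : F[X], g.Monic → g.natDegree = m → h.natDegree = n →
      (g.comp h - h ^ m).natDegree ≤ (m - 1) * n := by
    intro g h hgm' hgd hhd
    have e : g.comp h - h ^ m = (g - X ^ m).comp h := by
      rw [sub_comp, X_pow_comp]
    rw [e]
    calc ((g - X ^ m).comp h).natDegree ≤ (g - X ^ m).natDegree * h.natDegree :=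
          natDegree_comp_le
      _ ≤ (m - 1) * n := by
          apply Nat.mul_le_mul
          · have := my_sub_X_pow_natDegree_le hgm'
            rw [hgd] at this; exact this
          · exact hhd.le
  have hhh : h₁ = h₂ := by
    by_contra hne
    have hd : h₁ - h₂ ≠ 0 := sub_ne_zero.mpr hne
    set A : F[X] := ∑ i ∈ Finset.range m, h₁ ^ i * h₂ ^ (m - 1 - i) with hA
    have hterm : ∀ i ∈ Finset.range m, (h₁ ^ i * h₂ ^ (m - 1 - i)).Monic ∧
        (h₁ ^ i * h₂ ^ (m - 1 - i)).natDegree = (m - 1) * n := by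
      intro i hi
      have hmon : (h₁ ^ i * h₂ ^ (m - 1 - i)).Monic := (hh₁.pow i).mul (hh₂.pow _)
      refine ⟨hmon, ?_⟩
      rw [natDegree_mul ((hh₁.pow i).ne_zero) ((hh₂.pow _).ne_zero),
        natDegree_pow, natDegree_pow, hn]
      have : i ≤ m - 1 := by simp at hi; omega
      rw [← add_mul]
      congr 1
      omega
    have hAcoeff : A.coeff ((m - 1) * n) = (m : F) := by
      rw [hA, finset_sum_coeff]
      rw [Finset.sum_congr rfl (fun i hi => by
        rw [← (hterm i hi).2, (hterm i hi).1.coeff_natDegree])]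
      simp
    have hmne : (m : F) ≠ 0 := Nat.cast_ne_zero.mpr (by omega)
    have hAne : A ≠ 0 := fun h0' => by
      rw [h0', coeff_zero] at hAcoeff
      exact hmne hAcoeff.symm
    have hAdegge : (m - 1) * n ≤ A.natDegree := le_natDegree_of_ne_zero (by
      rw [hAcoeff]; exact hmne)
    have hprod : A * (h₁ - h₂) = h₁ ^ m - h₂ ^ m := geom_sum₂_mul h₁ h₂ m
    have hrhs : h₁ ^ m - h₂ ^ m = (g₂.comp h₂ - h₂ ^ m) - (g₁.comp h₁ - h₁ ^ m) := by
      rw [heq]; ring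
    have hdegrhs : (h₁ ^ m - h₂ ^ m).natDegree ≤ (m - 1) * n := by
      rw [hrhs]
      refine (natDegree_sub_le _ _).trans ?_
      exact max_le (key g₂ h₂ hg₂ hm hn) (key g₁ h₁ hg₁ rfl rfl)
    have hmul : (A * (h₁ - h₂)).natDegree = A.natDegree + (h₁ - h₂).natDegree :=
      natDegree_mul hAne hd
    have hd0 : (h₁ - h₂).natDegree = 0 := by
      have h1 : A.natDegree + (h₁ - h₂).natDegree ≤ (m - 1) * n := by
        rw [← hmul, hprod]; exact hdegrhs
      omega
    have : h₁ - h₂ = C ((h₁ - h₂).coeff 0) := eq_C_of_natDegree_eq_zero hd0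
    rw [coeff_sub, h0, sub_self, map_zero] at this
    exact hd this
  refine ⟨hhh, ?_⟩
  have heq' : g₁.comp h₂ = g₂.comp h₂ := hhh ▸ heq
  have hz : (g₁ - g₂).comp h₂ = 0 := by
    rw [sub_comp, heq', sub_self]
  rcases comp_eq_zero_iff.mp hz with h' | h'
  · exact sub_eq_zero.mp h'
  · exfalso
    have h2 := h'.2
    have : h₂.natDegree = 0 := by rw [h2]; simp
    omega

-- coefficients of a monic complex polynomial whose roots are all integral are integral
theorem my_coeff_integral_of_roots {p : ℂ[X]} (hp : p.Monic)
    (hr : ∀ z ∈ p.roots, IsIntegral ℤ z) : ∀ i, IsIntegral ℤ (p.coeff i) := by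
  have hsplit : p = (p.roots.map fun a => X - C a).prod :=
    (IsAlgClosed.splits p).eq_prod_roots_of_monic hp
  set S := integralClosure ℤ ℂ
  set ι : S →+* ℂ := algebraMap S ℂ with hι
  have hmem : p ∈ lifts ι := by
    rw [hsplit]
    refine Submonoid.multiset_prod_mem _ _ ?_
    intro q hq
    rw [Multiset.mem_map] at hq
    obtain ⟨a, ha, rfl⟩ := hq
    have : (X - C a : ℂ[X]) = map ι (X - C ⟨a, hr a ha⟩) := by
      rw [Polynomial.map_sub, map_X, map_C]
      rfl
    rw [this]
    exact ⟨X - C ⟨a, hr a ha⟩, rfl⟩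
  intro i
  rw [lifts_iff_coeff_lifts] at hmem
  obtain ⟨c, hc⟩ := hmem i
  rw [← hc]
  exact c.2

theorem my_coeffs_integral (f : ℤ[X]) (hf : f.Monic)
    (g h : Polynomial ℂ) (hg : g.Monic) (hh : h.Monic)
    (hdg : 1 ≤ g.natDegree) (hdh : 1 ≤ h.natDegree) (hh0 : h.eval 0 = 0)
    (hcomp : f.map (Int.castRingHom ℂ) = g.comp h) :
    (∀ i, IsIntegral ℤ (g.coeff i)) ∧ (∀ i, IsIntegral ℤ (h.coeff i)) := by
  set F := f.map (Int.castRingHom ℂ) with hF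
  have hFmonic : F.Monic := hf.map _
  have hFroots : ∀ z ∈ F.roots, IsIntegral ℤ z := by
    intro z hz
    refine ⟨f, hf, ?_⟩
    have := isRoot_of_mem_roots hz
    rwa [IsRoot, eval_map] at this
  -- g as product over its roots
  have hgsplit : g = (g.roots.map fun a => X - C a).prod :=
    (IsAlgClosed.splits g).eq_prod_roots_of_monic hg
  -- F = prod over beta of (h - C beta)
  have hFprod : F = (g.roots.map fun b => h - C b).prod := by
    rw [hcomp]
    conv_lhs => rw [hgsplit]
    rw [multiset_prod_comp]
    congr 1
    rw [Multiset.map_map]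
    apply Multiset.map_congr rfl
    intro b _
    simp [sub_comp]
  have hhb : ∀ b ∈ g.roots, (h - C b).Monic := by
    intro b _
    have : degree (-C b) < degree h := by
      apply lt_of_le_of_lt (degree_neg (C b) ▸ degree_C_le)
      rw [degree_eq_natDegree hh.ne_zero]
      exact_mod_cast Nat.lt_of_lt_of_le Nat.zero_lt_one (by exact_mod_cast hdh)
    have := hh.add_of_left this
    rwa [← sub_eq_add_neg] at this
  have hkey : ∀ b ∈ g.roots, ∀ i, IsIntegral ℤ ((h - C b).coeff i) := by
    intro b hb
    apply my_coeff_integral_of_roots (hhb b hb)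
    intro z hz
    apply hFroots
    have hdvd : (h - C b) ∣ F := by
      rw [hFprod]
      exact Multiset.dvd_prod (Multiset.mem_map_of_mem _ hb)
    have hFne : F ≠ 0 := hFmonic.ne_zero
    exact (mem_roots hFne).mpr ((isRoot_of_mem_roots hz).dvd hdvd)
  have hbint : ∀ b ∈ g.roots, IsIntegral ℤ b := by
    intro b hb
    have := hkey b hb 0
    rw [coeff_sub, coeff_C_zero, coeff_zero_eq_eval_zero, hh0, zero_sub] at this
    have := this.neg
    rwa [neg_neg] at this
  constructor
  · -- g coefficients
    apply my_coeff_integral_of_roots hg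
    exact hbint
  · -- h coefficients
    have : ∃ b, b ∈ g.roots := by
      rw [← Multiset.card_pos_iff_exists_mem]
      have := (splits_iff_card_roots.mp (IsAlgClosed.splits g))
      omega
    obtain ⟨b, hb⟩ := this
    intro i
    have h1 := hkey b hb i
    have h2 : h.coeff i = (h - C b).coeff i + (C b).coeff i := by
      rw [coeff_sub]; ring
    rw [h2]
    refine h1.add ?_
    rcases Nat.eq_zero_or_pos i with rfl | hi
    · rw [coeff_C_zero]; exact hbint b hb
    · rw [coeff_C, if_neg (by omega)]; exact isIntegral_zero

noncomputable abbrev Qbar := AlgebraicClosure ℚ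

instance : Algebra.IsAlgebraic ℚ Qbar := AlgebraicClosure.isAlgebraic ℚ

instance : IsAlgClosure ℚ Qbar := ⟨inferInstance, inferInstance⟩

theorem my_fixed_is_rat {c : Qbar}
    (hfix : ∀ σ : Qbar ≃ₐ[ℚ] Qbar, σ c = c) :
    c ∈ (algebraMap ℚ Qbar).range := by
  have hint : IsIntegral ℚ c := Algebra.IsIntegral.isIntegral c
  set p := minpoly ℚ c with hp
  have hpne : p ≠ 0 := minpoly.ne_zero hint
  have hsplits : (p.map (algebraMap ℚ Qbar)).Splits := IsAlgClosed.splits _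
  have hroots_eq : ∀ y ∈ (p.map (algebraMap ℚ Qbar)).roots, y = c := by
    intro y hy
    have hev : (Polynomial.aeval y) (minpoly ℚ c) = 0 := by
      have := isRoot_of_mem_roots hy
      rwa [IsRoot, eval_map, ← aeval_def] at this
    obtain ⟨σ, hσ⟩ := minpoly.exists_algEquiv_of_root hint.isAlgebraic hev
    calc y = σ.symm (σ y) := (σ.symm_apply_apply y).symm
      _ = σ.symm c := by rw [hσ]
      _ = c := hfix σ.symm
  have hnodup : (p.map (algebraMap ℚ Qbar)).roots.Nodup :=
    nodup_roots ((minpoly.irreducible hint).separable.map)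
  have hcard : p.natDegree = (p.map (algebraMap ℚ Qbar)).roots.card :=
    ((natDegree_map _).symm.trans hsplits.natDegree_eq_card_roots)
  have hdeg1 : p.natDegree = 1 := by
    have hpos := minpoly.natDegree_pos hint
    set R := (p.map (algebraMap ℚ Qbar)).roots with hR
    have hrep : R = Multiset.replicate R.card c :=
      Multiset.eq_replicate.mpr ⟨rfl, hroots_eq⟩
    classical
    have hle : R.card ≤ 1 := by
      have h1 := Multiset.nodup_iff_count_le_one.mp hnodup c
      rw [hrep, Multiset.count_replicate_self] at h1
      exact h1
    rw [hp] at hcard ⊢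
    omega
  rw [← minpoly.degree_eq_one_iff]
  rw [degree_eq_natDegree hpne, hdeg1]
  rfl

noncomputable def myι : Qbar →ₐ[ℚ] ℂ := IsAlgClosed.lift

theorem my_mem_range_of_integral {c : ℂ} (hc : IsIntegral ℤ c) :
    ∃ r : Qbar, myι r = c := by
  have hq : IsIntegral ℚ c := hc.tower_top
  set p := minpoly ℚ c with hp
  have hpne : p ≠ 0 := minpoly.ne_zero hq
  have hsplit : (p.map (algebraMap ℚ Qbar)).Splits :=
    IsAlgClosed.splits _
  have hmaps : p.map (algebraMap ℚ ℂ) = (p.map (algebraMap ℚ Qbar)).map myι.toRingHom := by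
    rw [map_map]
    congr 1
    exact myι.comp_algebraMap.symm
  have hcmem : c ∈ (p.map (algebraMap ℚ ℂ)).roots :=
    (mem_roots_map hpne).mpr (by rw [← aeval_def]; exact minpoly.aeval ℚ c)
  rw [hmaps, hsplit.roots_map _, Multiset.mem_map] at hcmem
  obtain ⟨r, _, hr⟩ := hcmem
  exact ⟨r, hr⟩
theorem integer_coeffs_of_monic_decomposition (f : ℤ[X]) (hf : f.Monic)
    (g h : Polynomial ℂ) (hg : g.Monic) (hh : h.Monic)
    (hdg : 2 ≤ g.natDegree) (hdh : 2 ≤ h.natDegree) (hh0 : h.eval 0 = 0)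
    (hcomp : f.map (Int.castRingHom ℂ) = g.comp h) :
    (∃ g' : ℤ[X], g = g'.map (Int.castRingHom ℂ)) ∧
    (∃ h' : ℤ[X], h = h'.map (Int.castRingHom ℂ)) := by
  haveI : CharZero Qbar := charZero_of_injective_algebraMap (algebraMap ℚ Qbar).injective
  obtain ⟨hgint, hhint⟩ := my_coeffs_integral f hf g h hg hh (by omega) (by omega) hh0 hcomp
  have ιinj : Function.Injective myι.toRingHom := myι.toRingHom.injective
  -- lift g and h to Qbar
  have lift : ∀ p : ℂ[X], (∀ i, IsIntegral ℤ (p.coeff i)) →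
      ∃ q : Qbar[X], q.map myι.toRingHom = p := by
    intro p hp
    refine (mem_lifts _).mp ((lifts_iff_coeff_lifts _).mpr fun n => ?_)
    obtain ⟨r, hr⟩ := my_mem_range_of_integral (hp n)
    exact ⟨r, hr⟩
  obtain ⟨g₀, hg₀⟩ := lift g hgint
  obtain ⟨h₀, hh₀⟩ := lift h hhint
  have hg₀deg : g₀.natDegree = g.natDegree := by
    rw [← hg₀, natDegree_map_eq_of_injective ιinj]
  have hh₀deg : h₀.natDegree = h.natDegree := by
    rw [← hh₀, natDegree_map_eq_of_injective ιinj]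
  have hg₀monic : g₀.Monic := by
    have := leadingCoeff_map_of_injective ιinj g₀
    rw [hg₀, hg.leadingCoeff] at this
    have : myι g₀.leadingCoeff = myι 1 := by rw [map_one]; exact this.symm
    exact ιinj this
  have hh₀monic : h₀.Monic := by
    have := leadingCoeff_map_of_injective ιinj h₀
    rw [hh₀, hh.leadingCoeff] at this
    have : myι h₀.leadingCoeff = myι 1 := by rw [map_one]; exact this.symm
    exact ιinj this
  have hh₀0 : h₀.coeff 0 = 0 := by
    apply ιinj
    have : (h₀.map myι.toRingHom).coeff 0 = h.coeff 0 := by rw [hh₀]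
    rw [coeff_map] at this
    rw [map_zero]
    rw [this, coeff_zero_eq_eval_zero, hh0]
  have hcast : myι.toRingHom.comp (Int.castRingHom Qbar) = Int.castRingHom ℂ :=
    RingHom.ext_int _ _
  have hcompK : f.map (Int.castRingHom Qbar) = g₀.comp h₀ := by
    apply map_injective myι.toRingHom ιinj
    rw [Polynomial.map_comp, hg₀, hh₀, map_map, hcast, hcomp]
  -- invariance under Galois
  have hfix : ∀ σ : Qbar ≃ₐ[ℚ] Qbar,
      g₀.map (σ : Qbar →+* Qbar) = g₀ ∧ h₀.map (σ : Qbar →+* Qbar) = h₀ := by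
    intro σ
    have σinj : Function.Injective (σ : Qbar →+* Qbar) := σ.injective
    have hfinv : (f.map (Int.castRingHom Qbar)).map (σ : Qbar →+* Qbar) =
        f.map (Int.castRingHom Qbar) := by
      rw [map_map, RingHom.ext_int ((σ : Qbar →+* Qbar).comp (Int.castRingHom Qbar))
        (Int.castRingHom Qbar)]
    have heq : (g₀.map (σ : Qbar →+* Qbar)).comp (h₀.map (σ : Qbar →+* Qbar)) =
        g₀.comp h₀ := by
      rw [← Polynomial.map_comp, ← hcompK, hfinv, hcompK]
    have := my_decomp_unique (hg₀monic.map _) (hh₀monic.map _) hg₀monic hh₀monic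
      (by rw [natDegree_map_eq_of_injective σinj])
      (by rw [natDegree_map_eq_of_injective σinj])
      (by rw [natDegree_map_eq_of_injective σinj, hg₀deg]; omega)
      (by rw [natDegree_map_eq_of_injective σinj, hh₀deg]; omega)
      (by rw [coeff_map, hh₀0, map_zero])
      heq
    exact ⟨this.2, this.1⟩
  -- conclude rationality and integrality for each coefficient
  have final : ∀ (p : ℂ[X]) (p₀ : Qbar[X]), p₀.map myι.toRingHom = p →
      (∀ i, IsIntegral ℤ (p.coeff i)) →
      (∀ σ : Qbar ≃ₐ[ℚ] Qbar, p₀.map (σ : Qbar →+* Qbar) = p₀) →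
      ∃ p' : ℤ[X], p = p'.map (Int.castRingHom ℂ) := by
    intro p p₀ hmap hint hσ
    have hcoeff : ∀ n, p.coeff n ∈ Set.range (Int.castRingHom ℂ) := by
      intro n
      have hfixn : ∀ σ : Qbar ≃ₐ[ℚ] Qbar, σ (p₀.coeff n) = p₀.coeff n := by
        intro σ
        have := congrArg (fun q => Polynomial.coeff q n) (hσ σ)
        simpa [coeff_map] using this
      obtain ⟨q, hq⟩ := my_fixed_is_rat hfixn
      have hpn : p.coeff n = algebraMap ℚ ℂ q := by
        rw [← hmap, coeff_map, ← hq, ← myι.commutes q]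
        rfl
      have hqi : IsIntegral ℤ q := by
        have := hint n
        rw [hpn] at this
        exact (isIntegral_algebraMap_iff (algebraMap ℚ ℂ).injective).mp this
      obtain ⟨z, hz⟩ := IsIntegrallyClosed.isIntegral_iff.mp hqi
      refine ⟨z, ?_⟩
      rw [hpn, ← hz]
      simp
    obtain ⟨p', hp'⟩ := (mem_lifts _).mp ((lifts_iff_coeff_lifts _).mpr hcoeff)
    exact ⟨p', hp'.symm⟩
  exact ⟨final g g₀ hg₀ hgint (fun σ => (hfix σ).1),
    final h h₀ hh₀ hhint (fun σ => (hfix σ).2)⟩
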